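/- Let A be an n×n matrix over the max-plus semiring, and suppose that the permutation weight w(π,A) = Σ_{i=1}^n a_{i,π(i)} is finite for at least one permutation π of {1,...,n}. Then there exist diagonal matrices C and D (with all diagonal entries finite) such that maper(C⊗A⊗D) = 0 and every entry of C⊗A⊗D is ≤ 0. -/

import Mathlib

/-!  Max-plus (tropical) semiring `MP = ℝ ∪ {ε}`, `ε = -∞ = ⊥`,
`a ⊕ b = max a b` and `a ⊗ b = a + b`. -/

abbrev MP := WithBot ℝ

/-- Tropical (max-plus) matrix product: `(A ⊗ B) i j = max_k (A i k + B k j)`. -/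
noncomputable def mpMul {α β γ : Type*} [Fintype β] (A : Matrix α β MP) (B : Matrix β γ MP) :
    Matrix α γ MP :=
  fun i j => Finset.univ.sup fun k => A i k + B k j

/-- Tropical matrix-vector product: `(A ⊗ x) i = max_k (A i k + x k)`. -/
noncomputable def mpMulVec {α β : Type*} [Fintype β] (A : Matrix α β MP) (x : β → MP) : α → MP :=
  fun i => Finset.univ.sup fun k => A i k + x k

/-- Diagonal matrix with finite diagonal entries `d i` and off-diagonal entries `ε`. -/
noncomputable def mpDiag {α : Type*} [DecidableEq α] (d : α → ℝ) : Matrix α α MP :=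
  fun i j => if i = j then (d i : MP) else ⊥

/-- Tropical permanent: `maper A = max_{π} Σ_i A i (π i)`. -/
noncomputable def maper {α : Type*} [Fintype α] [DecidableEq α] (A : Matrix α α MP) : MP :=
  Finset.univ.sup fun π : Equiv.Perm α => ∑ i, A i (π i)

/-- Maximum cycle mean:
`λ(A) = sup { (A i₁ i₂ + A i₂ i₃ + ⋯ + A iₖ i₁)/k : k ≥ 1, i₁,…,iₖ }` (`ε` if none finite). -/
noncomputable def mcm {α : Type*} [Fintype α] (A : Matrix α α MP) : MP :=
  sSup {x : MP | ∃ k : ℕ, ∃ hk : 0 < k, ∃ f : Fin k → α,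
    x = WithBot.map (fun w : ℝ => w / (k : ℝ))
      (∑ i : Fin k, A (f i) (f ⟨(i.1 + 1) % k, Nat.mod_lt _ hk⟩))}

/-- Tropical tensor product `A ⊠ B`: the block matrix whose `(k,l)` block is `A ⊗ B k l`;
the row index `(k, i)` denotes position `i` inside block row `k`. -/
noncomputable def mpTensor {α β γ δ : Type*} (A : Matrix α β MP) (B : Matrix γ δ MP) :
    Matrix (γ × α) (δ × β) MP :=
  fun p q => A p.2 q.2 + B p.1 q.1

/-- Tensor product of column vectors: `(x ⊠ y) (k, i) = x i + y k`. -/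
noncomputable def mpTensorVec {α γ : Type*} (x : α → MP) (y : γ → MP) : γ × α → MP :=
  fun p => x p.2 + y p.1

/-- The tropical unit matrix: `0` on the diagonal, `ε` elsewhere. -/
noncomputable def mpUnit (α : Type*) [DecidableEq α] : Matrix α α MP :=
  fun i j => if i = j then 0 else ⊥

/-- `vec X`: the columns of `X` stacked; component `(c, r)` is `X r c`. -/
def mpVec {α β : Type*} (X : Matrix α β MP) : β × α → MP := fun p => X p.2 p.1

/-- If some permutation weight of `A` is finite, then there are diagonal
matrices `C`, `D` with finite diagonal entries such that `maper (C ⊗ A ⊗ D) = 0` and every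
entry of `C ⊗ A ⊗ D` is `≤ 0`. -/


private def spliceFn {n : ℕ} (g : ℕ → Fin n) (s d : ℕ) : ℕ → Fin n :=
  fun u => if u ≤ s then g u else g (u + d)

private def consFn {n : ℕ} (i : Fin n) (g : ℕ → Fin n) : ℕ → Fin n
  | 0 => i
  | (u+1) => g u

private lemma splice_sum {n : ℕ} (w : Fin n → Fin n → ℝ) (g : ℕ → Fin n)
    (s t k : ℕ) (hst : s < t) (htk : t ≤ k) (hg : g s = g t) :
    ∑ u ∈ Finset.range (k - (t - s)),
        w (spliceFn g s (t - s) u) (spliceFn g s (t - s) (u + 1))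
      + ∑ u ∈ Finset.Ico s t, w (g u) (g (u + 1))
      = ∑ u ∈ Finset.range k, w (g u) (g (u + 1)) := by
  set d := t - s with hd
  set k' := k - d with hk'
  have hsk' : s ≤ k' := by omega
  have e2 : ∀ u, s ≤ u → spliceFn g s d u = g (u + d) := by
    intro u hu
    rcases eq_or_lt_of_le hu with h | h
    · simp only [spliceFn, if_pos h.ge]
      have hts : u + d = t := by omega
      rw [hts, ← h]
      exact hg
    · simp only [spliceFn]
      rw [if_neg (by omega)]
  have e1 : ∀ u < s, spliceFn g s d u = g u := by
    intro u hu; simp only [spliceFn, if_pos (by omega : u ≤ s)]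
  rw [Finset.range_eq_Ico, ← Finset.sum_Ico_consecutive _ (Nat.zero_le s) hsk']
  have hA : ∑ u ∈ Finset.Ico 0 s, w (spliceFn g s d u) (spliceFn g s d (u + 1))
      = ∑ u ∈ Finset.Ico 0 s, w (g u) (g (u + 1)) := by
    refine Finset.sum_congr rfl fun u hu => ?_
    simp only [Finset.mem_Ico] at hu
    rcases lt_or_eq_of_le (Nat.succ_le_of_lt hu.2) with h | h
    · rw [e1 u hu.2, e1 (u+1) h]
    · rw [e1 u hu.2]
      have : spliceFn g s d (u+1) = g (u+1) := by
        simp only [spliceFn, if_pos (le_of_eq h)]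
      rw [this]
  have hB : ∑ u ∈ Finset.Ico s k', w (spliceFn g s d u) (spliceFn g s d (u + 1))
      = ∑ u ∈ Finset.Ico t k, w (g u) (g (u + 1)) := by
    have hterm : ∀ u ∈ Finset.Ico s k',
        w (spliceFn g s d u) (spliceFn g s d (u + 1)) = w (g (u + d)) (g (u + d + 1)) := by
      intro u hu
      simp only [Finset.mem_Ico] at hu
      rw [e2 u hu.1, e2 (u+1) (by omega)]
      have : u + 1 + d = u + d + 1 := by omega
      rw [this]
    rw [Finset.sum_congr rfl hterm, Finset.sum_Ico_eq_sum_range, Finset.sum_Ico_eq_sum_range]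
    have hkk : k' - s = k - t := by omega
    rw [hkk]
    refine Finset.sum_congr rfl fun i _ => ?_
    have h1 : s + i + d = t + i := by omega
    rw [h1]
  rw [hA, hB, add_right_comm,
    Finset.sum_Ico_consecutive _ (Nat.zero_le s) hst.le,
    Finset.sum_Ico_consecutive _ (Nat.zero_le t) htk, Finset.range_eq_Ico]

private lemma inner_shift {n : ℕ} (w : Fin n → Fin n → ℝ) (g : ℕ → Fin n) (s t : ℕ) :
    ∑ u ∈ Finset.range (t - s), w (g (s + u)) (g (s + u + 1))
      = ∑ u ∈ Finset.Ico s t, w (g u) (g (u + 1)) := by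
  rw [Finset.sum_Ico_eq_sum_range]

private lemma closed_walk_nonpos {n : ℕ} (w : Fin n → Fin n → ℝ)
    (Hs : ∀ (m : ℕ) (g : ℕ → Fin n), 0 < m → m ≤ n → g m = g 0 →
      (∀ s t, s < m → t < m → g s = g t → s = t) →
      ∑ u ∈ Finset.range m, w (g u) (g (u + 1)) ≤ 0) :
    ∀ (m : ℕ) (g : ℕ → Fin n), 0 < m → g m = g 0 →
      ∑ u ∈ Finset.range m, w (g u) (g (u + 1)) ≤ 0 := by
  intro m
  induction m using Nat.strong_induction_on with
  | _ m IH =>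
    intro g hm hclosed
    by_cases hinj : ∀ s t, s < m → t < m → g s = g t → s = t
    · have hmn : m ≤ n := by
        have hI : Function.Injective (fun t : Fin m => g t.1) := by
          intro a b hab
          exact Fin.ext (hinj a.1 b.1 a.2 b.2 hab)
        simpa using Fintype.card_le_of_injective _ hI
      exact Hs m g hm hmn hclosed hinj
    · push_neg at hinj
      obtain ⟨s₀, t₀, hs₀, ht₀, hgst₀, hne₀⟩ := hinj
      obtain ⟨s, t, hst, ht, hgst⟩ : ∃ s t, s < t ∧ t < m ∧ g s = g t := by
        rcases Nat.lt_or_gt_of_ne hne₀ with h | h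
        · exact ⟨s₀, t₀, h, ht₀, hgst₀⟩
        · exact ⟨t₀, s₀, h, hs₀, hgst₀.symm⟩
      have hinner : ∑ u ∈ Finset.Ico s t, w (g u) (g (u + 1)) ≤ 0 := by
        rw [← inner_shift]
        have := IH (t - s) (by omega) (fun u => g (s + u)) (by omega) (by
          show g (s + (t - s)) = g (s + 0)
          have h1 : s + (t - s) = t := by omega
          have h2 : s + 0 = s := by omega
          rw [h1, h2]; exact hgst.symm)
        exact this
      have houter : ∑ u ∈ Finset.range (m - (t - s)),
          w (spliceFn g s (t - s) u) (spliceFn g s (t - s) (u + 1)) ≤ 0 := by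
        apply IH (m - (t - s)) (by omega) _ (by omega)
        have h0 : spliceFn g s (t - s) 0 = g 0 := by
          simp only [spliceFn, if_pos (Nat.zero_le s)]
        have hM : spliceFn g s (t - s) (m - (t - s)) = g 0 := by
          simp only [spliceFn]
          rw [if_neg (by omega)]
          have : m - (t - s) + (t - s) = m := by omega
          rw [this]; exact hclosed
        rw [h0, hM]
      have := splice_sum w g s t m hst (by omega) hgst
      linarith

section q
variable {n : ℕ} (hn : 0 < n) (w : Fin n → Fin n → ℝ)

private noncomputable def qIter : ℕ → Fin n → ℝ
  | 0 => fun _ => 0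
  | (k+1) => fun i => max (qIter k i)
      (Finset.univ.sup' (Finset.univ_nonempty_iff.mpr ⟨⟨0, hn⟩⟩)
        fun j => w i j + qIter k j)

private lemma qIter_le_succ (k : ℕ) (i : Fin n) : qIter hn w k i ≤ qIter hn w (k+1) i :=
  le_max_left _ _

private lemma qIter_mono {k k' : ℕ} (h : k ≤ k') (i : Fin n) :
    qIter hn w k i ≤ qIter hn w k' i :=
  (monotone_nat_of_le_succ (fun m => qIter_le_succ hn w m i)) h

private lemma qIter_nonneg (k : ℕ) (i : Fin n) : 0 ≤ qIter hn w k i := by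
  have := qIter_mono hn w (Nat.zero_le k) i
  simpa [qIter] using this

private lemma qIter_step (k : ℕ) (i j : Fin n) :
    w i j + qIter hn w k j ≤ qIter hn w (k+1) i := by
  refine le_trans ?_ (le_max_right _ _)
  exact Finset.le_sup' (fun j => w i j + qIter hn w k j) (Finset.mem_univ j)

private lemma walk_le_qIter :
    ∀ (m k : ℕ) (g : ℕ → Fin n), m ≤ k →
      ∑ u ∈ Finset.range m, w (g u) (g (u + 1)) ≤ qIter hn w k (g 0) := by
  intro m
  induction m with
  | zero => intro k g _; simpa using qIter_nonneg hn w k (g 0)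
  | succ m IH =>
    intro k g hk
    obtain ⟨k', rfl⟩ : ∃ k', k = k' + 1 := ⟨k - 1, by omega⟩
    rw [Finset.sum_range_succ']
    have htail : ∑ u ∈ Finset.range m, w (g (u + 1)) (g (u + 1 + 1))
        ≤ qIter hn w k' (g 1) := IH k' (fun u => g (u + 1)) (by omega)
    have hstep := qIter_step hn w k' (g 0) (g 1)
    calc ∑ u ∈ Finset.range m, w (g (u + 1)) (g (u + 1 + 1)) + w (g 0) (g (0 + 1))
        ≤ qIter hn w k' (g 1) + w (g 0) (g 1) := by
          exact add_le_add htail (le_of_eq rfl)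
      _ ≤ qIter hn w (k' + 1) (g 0) := by linarith

private lemma qIter_attained (k : ℕ) (i : Fin n) :
    ∃ m ≤ k, ∃ g : ℕ → Fin n, g 0 = i ∧
      qIter hn w k i = ∑ u ∈ Finset.range m, w (g u) (g (u + 1)) := by
  induction k generalizing i with
  | zero => exact ⟨0, le_rfl, fun _ => i, rfl, by simp [qIter]⟩
  | succ k IH =>
    rcases le_total
        (Finset.univ.sup' (Finset.univ_nonempty_iff.mpr ⟨⟨0, hn⟩⟩)
          fun j => w i j + qIter hn w k j) (qIter hn w k i) with hc | hc
    · obtain ⟨m, hm, g, hg0, hgs⟩ := IH i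
      refine ⟨m, by omega, g, hg0, ?_⟩
      rw [show qIter hn w (k+1) i = max (qIter hn w k i) _ from rfl, max_eq_left hc]
      exact hgs
    · obtain ⟨j, -, hj⟩ := Finset.exists_mem_eq_sup' (Finset.univ_nonempty_iff.mpr ⟨⟨0, hn⟩⟩)
        (fun j => w i j + qIter hn w k j)
      obtain ⟨m, hm, g, hg0, hgs⟩ := IH j
      refine ⟨m + 1, by omega, consFn i g, rfl, ?_⟩
      rw [show qIter hn w (k+1) i = max (qIter hn w k i) _ from rfl, max_eq_right hc]
      rw [Finset.sum_range_succ']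
      have h1 : ∀ u : ℕ, consFn i g (u + 1) = g u := fun u => rfl
      simp only [h1, consFn]
      rw [hj, hgs, hg0]
      ring

private lemma walk_le_pot
    (Hclosed : ∀ (m : ℕ) (g : ℕ → Fin n), 0 < m → g m = g 0 →
      ∑ u ∈ Finset.range m, w (g u) (g (u + 1)) ≤ 0) :
    ∀ (m : ℕ) (g : ℕ → Fin n),
      ∑ u ∈ Finset.range m, w (g u) (g (u + 1)) ≤ qIter hn w (n-1) (g 0) := by
  intro m
  induction m using Nat.strong_induction_on with
  | _ m IH =>
    intro g
    by_cases hm : m ≤ n - 1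
    · exact walk_le_qIter hn w m (n-1) g hm
    · have hnm : n ≤ m := by omega
      have hni : ¬ Function.Injective (fun x : Fin (n+1) => g x.1) := by
        intro hI
        have := Fintype.card_le_of_injective _ hI
        simp only [Fintype.card_fin] at this
        omega
      rw [Function.not_injective_iff] at hni
      obtain ⟨a, b, hab, hne⟩ := hni
      obtain ⟨s, t, hst, ht, hgst⟩ : ∃ s t, s < t ∧ t ≤ n ∧ g s = g t := by
        rcases Nat.lt_or_gt_of_ne (Fin.val_ne_of_ne hne) with h | h
        · exact ⟨a.1, b.1, h, Nat.lt_succ_iff.mp b.2, hab⟩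
        · exact ⟨b.1, a.1, h, Nat.lt_succ_iff.mp a.2, hab.symm⟩
      have hinner : ∑ u ∈ Finset.Ico s t, w (g u) (g (u + 1)) ≤ 0 := by
        rw [← inner_shift]
        apply Hclosed (t - s) (fun u => g (s + u)) (by omega)
        show g (s + (t - s)) = g (s + 0)
        have h1 : s + (t - s) = t := by omega
        have h2 : s + 0 = s := by omega
        rw [h1, h2]; exact hgst.symm
      have houter : ∑ u ∈ Finset.range (m - (t - s)),
          w (spliceFn g s (t - s) u) (spliceFn g s (t - s) (u + 1))
          ≤ qIter hn w (n-1) (g 0) := by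
        have h0 : spliceFn g s (t - s) 0 = g 0 := by
          simp only [spliceFn, if_pos (Nat.zero_le s)]
        have := IH (m - (t - s)) (by omega) (spliceFn g s (t - s))
        rwa [h0] at this
      have := splice_sum w g s t m hst (by omega) hgst
      linarith

private lemma pot_step
    (Hclosed : ∀ (m : ℕ) (g : ℕ → Fin n), 0 < m → g m = g 0 →
      ∑ u ∈ Finset.range m, w (g u) (g (u + 1)) ≤ 0)
    (i j : Fin n) :
    w i j + qIter hn w (n-1) j ≤ qIter hn w (n-1) i := by
  obtain ⟨m, hm, g, hg0, hgs⟩ := qIter_attained hn w (n-1) j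
  have hW := walk_le_pot hn w Hclosed (m + 1) (consFn i g)
  rw [Finset.sum_range_succ'] at hW
  have h1 : ∀ u : ℕ, consFn i g (u + 1) = g u := fun u => rfl
  simp only [h1, consFn] at hW
  rw [hg0] at hW
  rw [hgs]
  linarith
end q

private noncomputable def pot {n : ℕ} (hn : 0 < n) (w : Fin n → Fin n → ℝ) : Fin n → ℝ :=
  qIter hn w (n - 1)

private lemma pot_nonneg {n : ℕ} (hn : 0 < n) (w : Fin n → Fin n → ℝ) (i : Fin n) :
    0 ≤ pot hn w i :=
  qIter_nonneg hn w _ i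

private lemma pot_step' {n : ℕ} (hn : 0 < n) (w : Fin n → Fin n → ℝ)
    (Hs : ∀ (m : ℕ) (g : ℕ → Fin n), 0 < m → m ≤ n → g m = g 0 →
      (∀ s t, s < m → t < m → g s = g t → s = t) →
      ∑ u ∈ Finset.range m, w (g u) (g (u + 1)) ≤ 0)
    (i j : Fin n) : w i j + pot hn w j ≤ pot hn w i :=
  pot_step hn w (closed_walk_nonpos w Hs) i j

private lemma mpMul_diag_left {n : ℕ} (c : Fin n → ℝ) (M : Matrix (Fin n) (Fin n) MP)
    (i j : Fin n) : mpMul (mpDiag c) M i j = (c i : MP) + M i j := by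
  unfold mpMul mpDiag
  apply le_antisymm
  · apply Finset.sup_le
    intro k _
    by_cases h : i = k
    · subst h; simp
    · rw [if_neg h, WithBot.bot_add]
      exact bot_le
  · have := Finset.le_sup (f := fun k => (if i = k then (c i : MP) else ⊥) + M k j)
      (Finset.mem_univ i)
    simpa using this

private lemma mpMul_diag_right {n : ℕ} (d : Fin n → ℝ) (M : Matrix (Fin n) (Fin n) MP)
    (i j : Fin n) : mpMul M (mpDiag d) i j = M i j + (d j : MP) := by
  unfold mpMul mpDiag
  apply le_antisymm
  · apply Finset.sup_le
    intro k _
    by_cases h : k = j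
    · subst h; simp
    · rw [if_neg h, WithBot.add_bot]
      exact bot_le
  · have := Finset.le_sup (f := fun k => M i k + (if k = j then (d k : MP) else ⊥))
      (Finset.mem_univ j)
    simpa using this

theorem exists_diag_normalizers (n : ℕ) (A : Matrix (Fin n) (Fin n) MP)
    (h : ∃ π : Equiv.Perm (Fin n), (∑ i, A i (π i)) ≠ ⊥) :
    ∃ c d : Fin n → ℝ,
      maper (mpMul (mpDiag c) (mpMul A (mpDiag d))) = 0 ∧
      ∀ i j, mpMul (mpDiag c) (mpMul A (mpDiag d)) i j ≤ 0 := by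
  rcases Nat.eq_zero_or_pos n with rfl | hn
  · refine ⟨Fin.elim0, Fin.elim0, ?_, fun i => i.elim0⟩
    unfold maper
    have : ∀ π : Equiv.Perm (Fin 0),
        (∑ i, mpMul (mpDiag Fin.elim0) (mpMul A (mpDiag Fin.elim0)) i (π i)) = 0 := by
      intro π; simp
    rw [show (fun π : Equiv.Perm (Fin 0) =>
        ∑ i, mpMul (mpDiag Fin.elim0) (mpMul A (mpDiag Fin.elim0)) i (π i))
      = fun _ => (0 : MP) from funext this]
    exact Finset.sup_const Finset.univ_nonempty _
  -- main case
  obtain ⟨π₁, hπ₁⟩ := h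
  obtain ⟨π₀, -, hπ₀⟩ := Finset.exists_max_image Finset.univ
    (fun π : Equiv.Perm (Fin n) => ∑ i, A i (π i)) ⟨π₁, Finset.mem_univ _⟩
  set A' : Matrix (Fin n) (Fin n) MP := fun i j => A i (π₀ j) with hA'
  have hopt : ∀ σ : Equiv.Perm (Fin n), ∑ x, A' x (σ x) ≤ ∑ x, A' x x := by
    intro σ
    have := hπ₀ (σ.trans π₀) (Finset.mem_univ _)
    simpa [hA', Equiv.trans_apply] using this
  have hd0 : (∑ i, A' i i) ≠ ⊥ := by
    intro hbot
    have hle := hπ₀ π₁ (Finset.mem_univ _)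
    rw [show (∑ i, A i (π₀ i)) = ∑ i, A' i i from rfl, hbot] at hle
    exact hπ₁ (le_bot_iff.mp hle)
  have hdiag : ∀ i, A' i i ≠ ⊥ := by
    intro i hib
    exact hd0 (WithBot.sum_eq_bot_iff.mpr ⟨i, Finset.mem_univ _, hib⟩)
  set b0 : Fin n → Fin n → ℝ := fun i j => WithBot.unbotD 0 (A' i j) with hb0
  have hcoe : ∀ i j, A' i j ≠ ⊥ → A' i j = (b0 i j : MP) := by
    intro i j hne
    obtain ⟨r, hr⟩ := WithBot.ne_bot_iff_exists.mp hne
    rw [hb0]; dsimp only; rw [← hr, WithBot.unbotD_coe]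
  set K : ℝ := 1 + ∑ p : Fin n, ∑ q : Fin n, |b0 p q| with hK
  have habs : ∀ i j, |b0 i j| ≤ K - 1 := by
    intro i j
    rw [hK]
    have h1 : |b0 i j| ≤ ∑ q : Fin n, |b0 i q| :=
      Finset.single_le_sum (f := fun q => |b0 i q|) (fun q _ => abs_nonneg _)
        (Finset.mem_univ j)
    have h2 : (∑ q : Fin n, |b0 i q|) ≤ ∑ p : Fin n, ∑ q : Fin n, |b0 p q| :=
      Finset.single_le_sum (f := fun p => ∑ q : Fin n, |b0 p q|)
        (fun p _ => Finset.sum_nonneg fun q _ => abs_nonneg _) (Finset.mem_univ i)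
    linarith
  have hKpos : 0 < K := by
    have := abs_nonneg (b0 ⟨0, hn⟩ ⟨0, hn⟩)
    have := habs ⟨0, hn⟩ ⟨0, hn⟩
    linarith
  set C : ℝ := (2 * n + 2) * K with hC
  have hCpos : 0 < C := by
    have h2n : (0 : ℝ) ≤ 2 * n := by positivity
    nlinarith
  set b' : Fin n → Fin n → ℝ := fun i j => WithBot.unbotD (-C) (A' i j) with hb'
  have hb'fin : ∀ i j, A' i j ≠ ⊥ → b' i j = b0 i j := by
    intro i j hne
    rw [hb', hb0]
    dsimp only
    rw [hcoe i j hne]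
    simp
  have hb'bot : ∀ i j, A' i j = ⊥ → b' i j = -C := by
    intro i j he; rw [hb']; simp [he]
  set w : Fin n → Fin n → ℝ := fun i j => b' i j - b' j j with hw
  have hwdiagb : ∀ j, b' j j = b0 j j := fun j => hb'fin j j (hdiag j)
  have hwle : ∀ i j, w i j ≤ 2 * K := by
    intro i j
    have h2 : -b' j j ≤ K - 1 := by
      rw [hwdiagb j]; have := (abs_le.mp (habs j j)).1; linarith
    have h1 : b' i j ≤ K := by
      by_cases hne : A' i j = ⊥
      · rw [hb'bot i j hne]; linarith
      · rw [hb'fin i j hne]; have := (abs_le.mp (habs i j)).2; linarith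
    rw [hw]; dsimp only; linarith
  have hwbot : ∀ i j, A' i j = ⊥ → w i j ≤ K - C := by
    intro i j he
    have h2 : -b' j j ≤ K - 1 := by
      rw [hwdiagb j]; have := (abs_le.mp (habs j j)).1; linarith
    rw [hw]; dsimp only; rw [hb'bot i j he]; linarith
  have Hs : ∀ (m : ℕ) (g : ℕ → Fin n), 0 < m → m ≤ n → g m = g 0 →
      (∀ s t, s < m → t < m → g s = g t → s = t) →
      ∑ u ∈ Finset.range m, w (g u) (g (u + 1)) ≤ 0 := by
    intro m g hm hmn hcl hinj
    by_cases hfin : ∀ t, t < m → A' (g t) (g (t + 1)) ≠ ⊥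
    · -- all edges finite: permutation argument
      set L : List (Fin n) := (List.range m).map g with hL
      have hLlen : L.length = m := by simp [hL]
      have hLnd : L.Nodup := by
        refine List.Nodup.map_on ?_ List.nodup_range
        intro x hx y hy hxy
        exact hinj x y (List.mem_range.mp hx) (List.mem_range.mp hy) hxy
      have hgetL : ∀ (t : ℕ) (ht : t < L.length), L[t] = g t := by
        intro t ht; simp [hL]
      set σ := L.formPerm with hσ
      have hσ1 : ∀ t, t < m → σ (g t) = g ((t + 1) % m) := by
        intro t ht
        have ht' : t < L.length := by rw [hLlen]; exact ht
        have h2 : (t + 1) % m < L.length := by rw [hLlen]; exact Nat.mod_lt _ hm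
        have hfp := List.formPerm_apply_getElem L hLnd t ht'
        rw [hgetL t ht'] at hfp
        rw [hσ, hfp]
        have h3 : (t + 1) % L.length = (t + 1) % m := by rw [hLlen]
        simp only [hLlen]
        exact hgetL _ h2
      have hmemL : ∀ x, x ∈ L ↔ ∃ t, t < m ∧ g t = x := by
        intro x; simp [hL, List.mem_map, List.mem_range]
      set S : Finset (Fin n) := (Finset.range m).image g with hS
      have hmemS : ∀ x, x ∈ S ↔ x ∈ L := by
        intro x
        rw [hS, Finset.mem_image, hmemL x]
        constructor
        · rintro ⟨t, ht, rfl⟩; exact ⟨t, Finset.mem_range.mp ht, rfl⟩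
        · rintro ⟨t, ht, rfl⟩; exact ⟨t, Finset.mem_range.mpr ht, rfl⟩
      have hsum := hopt σ
      rw [← Finset.sum_add_sum_compl S (fun x => A' x (σ x)),
          ← Finset.sum_add_sum_compl S (fun x => A' x x)] at hsum
      have hco : ∑ x ∈ Sᶜ, A' x (σ x) = ∑ x ∈ Sᶜ, A' x x := by
        refine Finset.sum_congr rfl fun x hx => ?_
        have hxL : x ∉ L := by
          rw [← hmemS]; exact (Finset.mem_compl.mp hx)
        rw [hσ, List.formPerm_apply_of_notMem hxL]
      rw [hco] at hsum
      have hcne : (∑ x ∈ Sᶜ, A' x x) ≠ ⊥ := by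
        intro hb
        obtain ⟨x, -, hx⟩ := WithBot.sum_eq_bot_iff.mp hb
        exact hdiag x hx
      have hS' : ∑ x ∈ S, A' x (σ x) ≤ ∑ x ∈ S, A' x x :=
        (WithBot.add_le_add_iff_right hcne).mp hsum
      have hinj' : ∀ x ∈ Finset.range m, ∀ y ∈ Finset.range m, g x = g y → x = y := by
        intro x hx y hy
        exact hinj x y (Finset.mem_range.mp hx) (Finset.mem_range.mp hy)
      rw [hS, Finset.sum_image hinj', Finset.sum_image hinj'] at hS'
      have hmod : ∀ t, t < m → g ((t + 1) % m) = g (t + 1) := by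
        intro t ht
        rcases Nat.lt_or_ge (t + 1) m with hlt | hge
        · rw [Nat.mod_eq_of_lt hlt]
        · have he : t + 1 = m := by omega
          rw [he, Nat.mod_self, hcl]
      have hLrw : ∑ t ∈ Finset.range m, A' (g t) (σ (g t))
          = ∑ t ∈ Finset.range m, ((b0 (g t) (g (t + 1)) : ℝ) : MP) := by
        refine Finset.sum_congr rfl fun t ht => ?_
        have ht' := Finset.mem_range.mp ht
        rw [hσ1 t ht', hmod t ht', hcoe _ _ (hfin t ht')]
      have hRrw : ∑ t ∈ Finset.range m, A' (g t) (g t)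
          = ∑ t ∈ Finset.range m, ((b0 (g t) (g t) : ℝ) : MP) := by
        refine Finset.sum_congr rfl fun t ht => ?_
        exact hcoe _ _ (hdiag (g t))
      rw [hLrw, hRrw, ← WithBot.coe_sum, ← WithBot.coe_sum] at hS'
      have R : ∑ t ∈ Finset.range m, b0 (g t) (g (t + 1))
          ≤ ∑ t ∈ Finset.range m, b0 (g t) (g t) := WithBot.coe_le_coe.mp hS'
      have hwterm : ∀ u ∈ Finset.range m, w (g u) (g (u + 1))
          = b0 (g u) (g (u + 1)) - b0 (g (u + 1)) (g (u + 1)) := by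
        intro u hu
        rw [hw]; dsimp only
        rw [hb'fin _ _ (hfin u (Finset.mem_range.mp hu)), hwdiagb]
      rw [Finset.sum_congr rfl hwterm, Finset.sum_sub_distrib]
      have E2 : ∑ u ∈ Finset.range m, b0 (g (u + 1)) (g (u + 1))
          = ∑ u ∈ Finset.range m, b0 (g u) (g u) := by
        obtain ⟨m', rfl⟩ : ∃ m', m = m' + 1 := ⟨m - 1, by omega⟩
        rw [Finset.sum_range_succ, Finset.sum_range_succ']
        rw [hcl]
      rw [E2]
      linarith
    · -- some bottom edge: magnitude bound
      push_neg at hfin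
      obtain ⟨t0, ht0, hbot⟩ := hfin
      have hmem : t0 ∈ Finset.range m := Finset.mem_range.mpr ht0
      have hsplit : ∑ u ∈ (Finset.range m).erase t0, w (g u) (g (u + 1))
          + w (g t0) (g (t0 + 1)) = ∑ u ∈ Finset.range m, w (g u) (g (u + 1)) :=
        Finset.sum_erase_add _ _ hmem
      have hbd : ∑ u ∈ (Finset.range m).erase t0, w (g u) (g (u + 1))
          ≤ ((Finset.range m).erase t0).card • (2 * K) :=
        Finset.sum_le_card_nsmul _ _ _ (fun u _ => hwle (g u) (g (u + 1)))
      have hcard : (((Finset.range m).erase t0).card : ℝ) ≤ (n : ℝ) := by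
        have h1 : ((Finset.range m).erase t0).card ≤ m := le_trans
          (Finset.card_le_card (Finset.erase_subset _ _)) (by simp)
        have h2 : ((Finset.range m).erase t0).card ≤ n := le_trans h1 hmn
        exact_mod_cast h2
      have hlast : w (g t0) (g (t0 + 1)) ≤ K - C := hwbot _ _ hbot
      rw [nsmul_eq_mul] at hbd
      have hcalc : ((((Finset.range m).erase t0).card : ℝ)) * (2 * K) ≤ (n : ℝ) * (2 * K) := by
        apply mul_le_mul_of_nonneg_right hcard
        positivity
      have hCval : (n : ℝ) * (2 * K) + (K - C) = -K := by rw [hC]; ring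
      linarith
  set p : Fin n → ℝ := pot hn w with hp
  have hstep : ∀ i j, w i j + p j ≤ p i := pot_step' hn w Hs
  set c : Fin n → ℝ := fun i => -(p i) with hc
  set d : Fin n → ℝ := fun j => p (π₀.symm j) - b0 (π₀.symm j) (π₀.symm j) with hd
  have hE : ∀ i j, mpMul (mpDiag c) (mpMul A (mpDiag d)) i j
      = (c i : MP) + (A i j + (d j : MP)) := by
    intro i j
    rw [mpMul_diag_left]
    congr 1
    exact mpMul_diag_right d A i j
  have cond2 : ∀ i j, mpMul (mpDiag c) (mpMul A (mpDiag d)) i j ≤ 0 := by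
    intro i j
    rw [hE]
    have hAij : A i j = A' i (π₀.symm j) := by
      rw [hA']; dsimp only; rw [Equiv.apply_symm_apply]
    have hdj : d j = p (π₀.symm j) - b0 (π₀.symm j) (π₀.symm j) := rfl
    set j' := π₀.symm j with hj'
    by_cases hb : A' i j' = ⊥
    · rw [hAij, hb, WithBot.bot_add, WithBot.add_bot]
      exact bot_le
    · rw [hAij, hcoe _ _ hb, hdj]
      have h1 := hstep i j'
      have h2 : w i j' = b0 i j' - b0 j' j' := by
        rw [hw]; dsimp only; rw [hb'fin _ _ hb, hwdiagb]
      rw [h2] at h1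
      have hreal : c i + (b0 i j' + (p j' - b0 j' j')) ≤ 0 := by
        rw [hc]; dsimp only; linarith
      exact_mod_cast hreal
  have hzero : ∀ i : Fin n, mpMul (mpDiag c) (mpMul A (mpDiag d)) i (π₀ i) = 0 := by
    intro i
    rw [hE]
    have hAii : A i (π₀ i) = ((b0 i i : ℝ) : MP) := hcoe i i (hdiag i)
    have hdi : d (π₀ i) = p i - b0 i i := by
      rw [hd]; dsimp only; rw [Equiv.symm_apply_apply]
    rw [hAii, hdi, hc]; dsimp only
    have hr : -p i + (b0 i i + (p i - b0 i i)) = 0 := by ring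
    exact_mod_cast hr
  refine ⟨c, d, ?_, cond2⟩
  unfold maper
  apply le_antisymm
  · apply Finset.sup_le
    intro σ _
    exact Finset.sum_nonpos fun i _ => cond2 i (σ i)
  · refine le_trans ?_ (Finset.le_sup (Finset.mem_univ π₀))
    rw [show (∑ i, mpMul (mpDiag c) (mpMul A (mpDiag d)) i (π₀ i)) = ∑ _i : Fin n, (0 : MP)
      from Finset.sum_congr rfl fun i _ => hzero i]
    rw [Finset.sum_const]
    simp
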